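/- Let A be an associative algebra over Q and (id, d_1, d_2, ...) a Hasse-Schmidt derivation. Then the endomorphisms ∂_n = Σ_{r_1+...+r_m=n} (-1)^{m+1} d_{r_1} d_{r_2} ... d_{r_m} / m (sum over compositions of n) are ordinary derivations of A. -/

import Mathlib

open PowerSeries Finset TensorProduct

namespace Stmt15Aux

/-! ### Scalar part: the power series `log(1+X)` and `exp(s·log(1+X)) = (1+X)^s` -/

noncomputable def Lc : ℕ → ℚ := fun p => (-1) ^ (p + 1) / p

noncomputable def Lser : ℚ⟦X⟧ := PowerSeries.mk Lc

lemma Lc_zero : Lc 0 = 0 := by simp [Lc]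

lemma constantCoeff_Lser : constantCoeff Lser = 0 := by
  rw [← coeff_zero_eq_constantCoeff]
  simp [Lser, Lc]
/-- low coefficients of powers of a series with zero constant term vanish -/
lemma coeff_pow_eq_zero {S : Type*} [Semiring S] {u : PowerSeries S}
    (hu : constantCoeff u = 0) :
    ∀ m k, k < m → coeff k (u ^ m) = 0 := by
  intro m
  induction m with
  | zero => intro k hk; omega
  | succ m ih =>
    intro k hk
    rw [pow_succ', coeff_mul]
    apply Finset.sum_eq_zero
    rintro ⟨i, j⟩ hij
    rw [Finset.HasAntidiagonal.mem_antidiagonal] at hij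
    rcases Nat.eq_zero_or_pos i with h0 | h0
    · subst h0
      simp only [coeff_zero_eq_constantCoeff, hu, zero_mul]
    · have : j < m := by omega
      rw [ih j this, mul_zero]

lemma coeff_deriv_Lser (k : ℕ) : coeff k (d⁄dX ℚ Lser) = (-1) ^ k := by
  rw [coeff_derivative]
  simp only [Lser, coeff_mk, Lc]
  have h : ((k : ℚ) + 1) ≠ 0 := by positivity
  field_simp
  push_cast
  ring

lemma one_add_X_mul_deriv_Lser : (1 + X) * d⁄dX ℚ Lser = 1 := by
  ext k
  rw [add_mul, one_mul, map_add]
  cases k with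
  | zero =>
    rw [coeff_zero_X_mul, coeff_deriv_Lser]
    simp
  | succ k =>
    rw [coeff_succ_X_mul, coeff_deriv_Lser, coeff_deriv_Lser, coeff_one]
    simp [pow_succ]
/-- coefficients of exp(s·log(1+X)) -/
noncomputable def gam (s : ℚ) (k : ℕ) : ℚ :=
  ∑ m ∈ range (k + 1), s ^ m / m.factorial * coeff k (Lser ^ m)

noncomputable def Gs (s : ℚ) : ℚ⟦X⟧ := PowerSeries.mk (gam s)

lemma gam_zero (s : ℚ) : gam s 0 = 1 := by
  simp [gam]

lemma coeff_Gs_mul_deriv (s : ℚ) (k : ℕ) :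
    coeff k (Gs s * d⁄dX ℚ Lser) =
      ∑ m ∈ range (k + 1), s ^ m / m.factorial * coeff k (Lser ^ m * d⁄dX ℚ Lser) := by
  rw [coeff_mul]
  have h1 : ∀ p ∈ antidiagonal k,
      coeff p.1 (Gs s) * coeff p.2 (d⁄dX ℚ Lser) =
      ∑ m ∈ range (k + 1), s ^ m / m.factorial *
        (coeff p.1 (Lser ^ m) * coeff p.2 (d⁄dX ℚ Lser)) := by
    rintro ⟨i, j⟩ hij
    rw [Finset.HasAntidiagonal.mem_antidiagonal] at hij
    have hik : i ≤ k := by omega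
    simp only [Gs, coeff_mk, gam]
    rw [Finset.sum_mul]
    rw [Finset.sum_subset (Finset.range_subset_range.2 (by omega : i + 1 ≤ k + 1))
      (fun m _ hm => by
        rw [Finset.mem_range, not_lt] at hm
        rw [coeff_pow_eq_zero constantCoeff_Lser m i (by omega)]
        simp)]
    exact Finset.sum_congr rfl (fun m _ => by ring)
  rw [Finset.sum_congr rfl h1, Finset.sum_comm]
  apply Finset.sum_congr rfl
  intro m _
  rw [coeff_mul, Finset.mul_sum]

lemma deriv_Gs (s : ℚ) : d⁄dX ℚ (Gs s) = s • (Gs s * d⁄dX ℚ Lser) := by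
  ext k
  rw [coeff_derivative, coeff_smul, coeff_Gs_mul_deriv]
  simp only [Gs, coeff_mk, gam]
  rw [Finset.sum_mul]
  rw [Finset.sum_range_succ']
  have h0 : s ^ 0 / (Nat.factorial 0) * coeff (k+1) (Lser ^ 0) * ((k:ℚ) + 1) = 0 := by
    simp [coeff_one]
  rw [h0, add_zero, smul_eq_mul, Finset.mul_sum]
  apply Finset.sum_congr rfl
  intro m _
  have hd : coeff (k + 1) (Lser ^ (m+1)) * ((k:ℚ)+1) = coeff k (d⁄dX ℚ (Lser ^ (m+1))) := by
    rw [coeff_derivative]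
  have hpow : d⁄dX ℚ (Lser ^ (m+1)) = (m+1) • (Lser ^ m * d⁄dX ℚ Lser) := by
    have := Derivation.leibniz_pow (PowerSeries.derivative (R := ℚ)) (a := Lser) (m+1)
    simpa [smul_eq_mul, Nat.add_sub_cancel] using this
  have hfac : (Nat.factorial (m+1) : ℚ) = (m+1) * Nat.factorial m := by
    rw [Nat.factorial_succ]; push_cast; ring
  rw [mul_assoc, hd, hpow, map_nsmul]
  rw [nsmul_eq_mul, hfac]
  have hne : ((m:ℚ)+1) ≠ 0 := by positivity
  have hne2 : (Nat.factorial m : ℚ) ≠ 0 := by exact_mod_cast Nat.factorial_ne_zero m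
  push_cast
  field_simp
  ring

lemma gam_succ (s : ℚ) (k : ℕ) : gam s (k + 1) * (k + 1) = (s - k) * gam s k := by
  have hODE : (1 + X) * d⁄dX ℚ (Gs s) = s • Gs s := by
    rw [deriv_Gs]
    rw [mul_smul_comm]
    congr 1
    calc (1 + X) * (Gs s * d⁄dX ℚ Lser) = Gs s * ((1 + X) * d⁄dX ℚ Lser) := by ring
      _ = Gs s := by rw [one_add_X_mul_deriv_Lser, mul_one]
  have hk := congrArg (fun f => coeff k f) hODE
  simp only [add_mul, one_mul, map_add, coeff_smul] at hk
  cases k with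
  | zero =>
    rw [coeff_zero_X_mul, add_zero, coeff_derivative] at hk
    simp only [Gs, coeff_mk, smul_eq_mul] at hk
    push_cast at hk ⊢
    linear_combination hk
  | succ k =>
    rw [coeff_succ_X_mul, coeff_derivative, coeff_derivative] at hk
    simp only [Gs, coeff_mk, smul_eq_mul] at hk
    push_cast at hk ⊢
    linear_combination hk

/-- descending-factorial/choose formula -/
lemma gam_nat (s : ℕ) : ∀ k : ℕ, gam (s : ℚ) k = (s.choose k : ℚ) := by
  intro k
  induction k with
  | zero => rw [gam_zero]; simp
  | succ k ih =>
    have h := gam_succ (s : ℚ) k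
    rw [ih] at h
    have hne : ((k:ℚ)+1) ≠ 0 := by positivity
    have hchoose := Nat.choose_succ_right_eq s k
    rcases lt_or_ge k s with hlt | hge
    · have hc : ((s - k : ℕ) : ℚ) = (s : ℚ) - k := by
        rw [Nat.cast_sub (le_of_lt hlt)]
      have : (s.choose (k+1) : ℚ) * ((k:ℚ)+1) = (s.choose k : ℚ) * ((s:ℚ) - k) := by
        rw [← hc]
        exact_mod_cast congrArg (Nat.cast : ℕ → ℚ) hchoose
      exact mul_right_cancel₀ hne (h.trans ((mul_comm _ _).trans this.symm))
    · -- k ≥ s : RHS choose is 0, and gam s (k+1) = 0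
      have hz : s.choose (k+1) = 0 := Nat.choose_eq_zero_of_lt (by omega)
      rw [hz]
      rcases eq_or_lt_of_le hge with heq | hlt'
      · -- s = k : factor (s - k) = 0
        have : (s:ℚ) - k = 0 := by rw [heq]; ring
        rw [this, zero_mul] at h
        have := mul_eq_zero.mp h
        rcases this with h1 | h2
        · simpa using h1
        · exact absurd h2 hne
      · -- s < k: gam s k = choose s k = 0
        have hz2 : s.choose k = 0 := Nat.choose_eq_zero_of_lt hlt'
        rw [hz2] at h
        push_cast at h
        rw [mul_zero] at h
        have := mul_eq_zero.mp h
        rcases this with h1 | h2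
        · simpa using h1
        · exact absurd h2 hne

/-- truncated log polynomial -/
noncomputable def logP (n : ℕ) : Polynomial ℚ :=
  ∑ p ∈ range (n + 1), Polynomial.C (Lc p) * Polynomial.X ^ p

/-- truncated exp(s·log) polynomial -/
noncomputable def expsP (n : ℕ) (s : ℚ) : Polynomial ℚ :=
  ∑ m ∈ range (n + 1), (s ^ m / m.factorial) • logP n ^ m

lemma coeff_logP (n k : ℕ) : (logP n).coeff k = if k ≤ n then Lc k else 0 := by
  rw [logP, Polynomial.finset_sum_coeff]
  rw [Finset.sum_congr rfl (fun p _ => by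
    rw [Polynomial.coeff_C_mul, Polynomial.coeff_X_pow])]
  split
  · rw [Finset.sum_eq_single k]
    · simp
    · intro p _ hp
      simp [Ne.symm hp]
    · intro hk
      rw [Finset.mem_range] at hk
      omega
  · apply Finset.sum_eq_zero
    intro p hp
    rw [Finset.mem_range] at hp
    have : k ≠ p := by omega
    simp [this]

lemma coeff_logP_coe (n k : ℕ) :
    coeff k ((logP n : ℚ⟦X⟧)) = if k ≤ n then Lc k else 0 := by
  rw [Polynomial.coeff_coe, coeff_logP]

lemma constantCoeff_logP_coe (n : ℕ) : constantCoeff ((logP n : ℚ⟦X⟧)) = 0 := by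
  rw [← coeff_zero_eq_constantCoeff, coeff_logP_coe]
  simp [Lc_zero]

/-- powers of series agreeing up to degree n agree up to degree n -/
lemma coeff_pow_congr {S : Type*} [Semiring S] {n : ℕ} {u v : PowerSeries S}
    (h : ∀ k ≤ n, coeff k u = coeff k v) :
    ∀ m, ∀ k ≤ n, coeff k (u ^ m) = coeff k (v ^ m) := by
  intro m
  induction m with
  | zero => intro k _; rfl
  | succ m ih =>
    intro k hk
    rw [pow_succ', pow_succ', coeff_mul, coeff_mul]
    apply Finset.sum_congr rfl
    rintro ⟨i, j⟩ hij
    rw [Finset.HasAntidiagonal.mem_antidiagonal] at hij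
    rw [h i (by omega), ih j (by omega)]

lemma coeff_mul_congr {S : Type*} [Semiring S] {n : ℕ} {u u' v v' : PowerSeries S}
    (hu : ∀ k ≤ n, coeff k u = coeff k u')
    (hv : ∀ k ≤ n, coeff k v = coeff k v') :
    ∀ k ≤ n, coeff k (u * v) = coeff k (u' * v') := by
  intro k hk
  rw [coeff_mul, coeff_mul]
  apply Finset.sum_congr rfl
  rintro ⟨i, j⟩ hij
  rw [Finset.HasAntidiagonal.mem_antidiagonal] at hij
  rw [hu i (by omega), hv j (by omega)]

/-- the key scalar congruence: exp(s log(1+X)) ≡ (1+X)^s mod X^(n+1) -/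
lemma key_dvd (n : ℕ) (s : ℕ) :
    (Polynomial.X : Polynomial ℚ) ^ (n + 1) ∣ expsP n s - (1 + Polynomial.X) ^ s := by
  rw [Polynomial.X_pow_dvd_iff]
  intro k hk
  have hkn : k ≤ n := by omega
  rw [Polynomial.coeff_sub, Polynomial.coeff_one_add_X_pow]
  have h1 : (expsP n s).coeff k = gam (s : ℚ) k := by
    rw [expsP, Polynomial.finset_sum_coeff]
    rw [Finset.sum_congr rfl (fun m _ => by rw [Polynomial.coeff_smul])]
    have h2 : ∀ m, (logP n ^ m).coeff k = coeff k (Lser ^ m) := by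
      intro m
      have := coeff_pow_congr (n := n) (u := (logP n : ℚ⟦X⟧)) (v := Lser)
        (fun j hj => by rw [coeff_logP_coe]; simp [hj, Lser, coeff_mk]) m k hkn
      rw [← this, ← Polynomial.coe_pow, Polynomial.coeff_coe]
    rw [Finset.sum_congr rfl (fun m _ => by rw [h2])]
    rw [gam]
    rw [Finset.sum_subset (Finset.range_subset_range.2 (by omega : k + 1 ≤ n + 1))
      (fun m _ hm => by
        rw [Finset.mem_range, not_lt] at hm
        rw [coeff_pow_eq_zero constantCoeff_Lser m k (by omega)]
        simp)]
    exact Finset.sum_congr rfl (fun m _ => by rw [smul_eq_mul])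
  rw [h1, gam_nat s k, sub_self]

/-- transport of polynomial congruences through aeval at a series with zero constant term -/
lemma aeval_coeff_congr {S : Type*} [Ring S] [Algebra ℚ S] {n : ℕ} (x : PowerSeries S)
    (hx : constantCoeff x = 0) {P Q : Polynomial ℚ}
    (h : (Polynomial.X : Polynomial ℚ) ^ (n + 1) ∣ P - Q) :
    ∀ k ≤ n, coeff k (Polynomial.aeval x P) = coeff k (Polynomial.aeval x Q) := by
  obtain ⟨H, hH⟩ := h
  have heq : Polynomial.aeval x P - Polynomial.aeval x Q = x ^ (n+1) * Polynomial.aeval x H := by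
    rw [← map_sub, hH, map_mul, map_pow, Polynomial.aeval_X]
  intro k hk
  have h2 : coeff k (x ^ (n+1) * Polynomial.aeval x H) = 0 := by
    rw [coeff_mul]
    apply Finset.sum_eq_zero
    rintro ⟨i, j⟩ hij
    rw [Finset.HasAntidiagonal.mem_antidiagonal] at hij
    rw [coeff_pow_eq_zero hx (n+1) i (by omega), zero_mul]
  have := congrArg (fun f => coeff k f) heq
  simp only [map_sub] at this
  rw [h2] at this
  exact sub_eq_zero.mp this

/-- expansion of aeval of expsP -/
lemma aeval_expsP {B : Type*} [Ring B] [Algebra ℚ B] (x : B) (n : ℕ) (s : ℚ) :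
    Polynomial.aeval x (expsP n s) =
      ∑ m ∈ range (n + 1), (s ^ m / m.factorial) • (Polynomial.aeval x (logP n)) ^ m := by
  rw [expsP, map_sum]
  apply Finset.sum_congr rfl
  intro m _
  rw [Polynomial.smul_eq_C_mul, map_mul, map_pow, Polynomial.aeval_C]
  rw [← Algebra.smul_def]

lemma aeval_logP {B : Type*} [Ring B] [Algebra ℚ B] (x : B) (n : ℕ) :
    Polynomial.aeval x (logP n) = ∑ p ∈ range (n + 1), Lc p • x ^ p := by
  rw [logP, map_sum]
  apply Finset.sum_congr rfl
  intro p _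
  rw [map_mul, map_pow, Polynomial.aeval_C, Polynomial.aeval_X, ← Algebra.smul_def]

/-- a vector-valued polynomial function vanishing on ℕ has zero coefficients -/
lemma poly_coeff_zero {V : Type*} [AddCommGroup V] [Module ℚ V] {K : ℕ} (w : ℕ → V)
    (h : ∀ s : ℕ, ∑ M ∈ range K, (s : ℚ) ^ M • w M = 0) :
    ∀ M ∈ range K, w M = 0 := by
  intro M hM
  rw [← Module.forall_dual_apply_eq_zero_iff ℚ]
  intro φ
  set p : Polynomial ℚ := ∑ M' ∈ range K, Polynomial.C (φ (w M')) * Polynomial.X ^ M' with hp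
  have hroot : ∀ s : ℕ, p.eval (s : ℚ) = 0 := by
    intro s
    rw [hp, Polynomial.eval_finset_sum]
    have : ∀ M' ∈ range K, (Polynomial.C (φ (w M')) * Polynomial.X ^ M').eval (s:ℚ)
        = φ ((s:ℚ) ^ M' • w M') := by
      intro M' _
      rw [Polynomial.eval_mul, Polynomial.eval_C, Polynomial.eval_pow, Polynomial.eval_X,
        map_smul, smul_eq_mul, mul_comm]
    rw [Finset.sum_congr rfl this, ← map_sum, h s, map_zero]
  have hp0 : p = 0 := by
    apply Polynomial.eq_zero_of_infinite_isRoot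
    apply Set.infinite_of_injective_forall_mem (f := fun s : ℕ => (s : ℚ))
      (hi := fun a b hab => Nat.cast_injective hab)
    intro s
    exact hroot s
  have hco : p.coeff M = φ (w M) := by
    rw [hp, Polynomial.finset_sum_coeff]
    rw [Finset.sum_congr rfl (fun M' _ => by
      rw [Polynomial.coeff_C_mul, Polynomial.coeff_X_pow])]
    rw [Finset.sum_eq_single M]
    · simp
    · intro p' _ hp'
      simp [Ne.symm hp']
    · intro hM'
      exact absurd hM hM'
  rw [← hco, hp0, Polynomial.coeff_zero]



/-! ### The endomorphism-ring side -/

variable {A : Type*} [Ring A] [Algebra ℚ A]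

noncomputable def dlin (d : ℕ → AddMonoid.End A) : ℕ → Module.End ℚ A :=
  fun k => AddMonoidHom.toRatLinearMap (d k)
lemma dlin_apply (d : ℕ → AddMonoid.End A) (k : ℕ) (x : A) : dlin d k x = d k x := rfl
noncomputable def del (d : ℕ → AddMonoid.End A) : PowerSeries (Module.End ℚ A) :=
  PowerSeries.mk (dlin d)
noncomputable def nu (d : ℕ → AddMonoid.End A) : PowerSeries (Module.End ℚ A) := del d - 1
noncomputable def dL (d : ℕ → AddMonoid.End A) : ℕ → Module.End ℚ (A ⊗[ℚ] A) :=
  fun k => LinearMap.rTensor A (dlin d k)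
noncomputable def dR (d : ℕ → AddMonoid.End A) : ℕ → Module.End ℚ (A ⊗[ℚ] A) :=
  fun k => LinearMap.lTensor A (dlin d k)
noncomputable def delL (d : ℕ → AddMonoid.End A) : PowerSeries (Module.End ℚ (A ⊗[ℚ] A)) :=
  PowerSeries.mk (dL d)
noncomputable def delR (d : ℕ → AddMonoid.End A) : PowerSeries (Module.End ℚ (A ⊗[ℚ] A)) :=
  PowerSeries.mk (dR d)
noncomputable def nuL (d : ℕ → AddMonoid.End A) := delL d - 1
noncomputable def nuR (d : ℕ → AddMonoid.End A) := delR d - 1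

section
variable (d : ℕ → AddMonoid.End A) (hd0 : d 0 = 1)

include hd0 in
lemma dlin_zero : dlin d 0 = 1 := by
  ext x
  rw [dlin_apply, hd0]
  rfl

include hd0 in
lemma coeff_nu (k : ℕ) :
    coeff k (nu d) = if k = 0 then 0 else dlin d k := by
  rw [nu, map_sub, del, coeff_mk, coeff_one]
  split
  · subst ‹k = 0›
    rw [dlin_zero d hd0, sub_self]
  · rw [sub_zero]

include hd0 in
lemma constantCoeff_nu : constantCoeff (nu d) = 0 := by
  rw [← coeff_zero_eq_constantCoeff, coeff_nu d hd0]
  simp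

include hd0 in
lemma del_eq : del d = 1 + nu d := by rw [nu]; abel

lemma delL_eq : delL d = 1 + nuL d := by rw [nuL]; abel
lemma delR_eq : delR d = 1 + nuR d := by rw [nuR]; abel

include hd0 in
lemma coeff_nuL (k : ℕ) :
    coeff k (nuL d) = LinearMap.rTensor A (coeff k (nu d)) := by
  rw [nuL, map_sub, delL, coeff_mk, coeff_one, coeff_nu d hd0]
  split
  · subst ‹k = 0›
    rw [LinearMap.rTensor_zero]
    rw [show dL d 0 = LinearMap.rTensor A (dlin d 0) from rfl, dlin_zero d hd0]
    rw [Module.End.one_eq_id, LinearMap.rTensor_id, ← Module.End.one_eq_id, sub_self]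
  · rw [sub_zero]
    rfl

include hd0 in
lemma coeff_nuR (k : ℕ) :
    coeff k (nuR d) = LinearMap.lTensor A (coeff k (nu d)) := by
  rw [nuR, map_sub, delR, coeff_mk, coeff_one, coeff_nu d hd0]
  split
  · subst ‹k = 0›
    rw [LinearMap.lTensor_zero]
    rw [show dR d 0 = LinearMap.lTensor A (dlin d 0) from rfl, dlin_zero d hd0]
    rw [Module.End.one_eq_id, LinearMap.lTensor_id, ← Module.End.one_eq_id, sub_self]
  · rw [sub_zero]
    rfl

include hd0 in
lemma coeff_pow_nuL (p : ℕ) : ∀ k,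
    coeff k ((nuL d) ^ p) = LinearMap.rTensor A (coeff k ((nu d) ^ p)) := by
  induction p with
  | zero =>
    intro k
    rw [pow_zero, pow_zero, coeff_one, coeff_one]
    split
    · rw [Module.End.one_eq_id, show (1 : Module.End ℚ A) = LinearMap.id from rfl,
        LinearMap.rTensor_id]
    · rw [LinearMap.rTensor_zero]
  | succ p ih =>
    intro k
    rw [pow_succ', pow_succ', coeff_mul, coeff_mul,
      ← LinearMap.coe_rTensorHom (M := A), map_sum]
    apply Finset.sum_congr rfl
    rintro ⟨i, j⟩ _
    rw [coeff_nuL d hd0, ih j]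
    rw [Module.End.mul_eq_comp, Module.End.mul_eq_comp, LinearMap.coe_rTensorHom,
      ← LinearMap.rTensor_comp]

include hd0 in
lemma coeff_pow_nuR (p : ℕ) : ∀ k,
    coeff k ((nuR d) ^ p) = LinearMap.lTensor A (coeff k ((nu d) ^ p)) := by
  induction p with
  | zero =>
    intro k
    rw [pow_zero, pow_zero, coeff_one, coeff_one]
    split
    · rw [Module.End.one_eq_id, show (1 : Module.End ℚ A) = LinearMap.id from rfl,
        LinearMap.lTensor_id]
    · rw [LinearMap.lTensor_zero]
  | succ p ih =>
    intro k
    rw [pow_succ', pow_succ', coeff_mul, coeff_mul,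
      ← LinearMap.coe_lTensorHom (M := A), map_sum]
    apply Finset.sum_congr rfl
    rintro ⟨i, j⟩ _
    rw [coeff_nuR d hd0, ih j]
    rw [Module.End.mul_eq_comp, Module.End.mul_eq_comp, LinearMap.coe_lTensorHom,
      ← LinearMap.lTensor_comp]

end

noncomputable def mu : (A ⊗[ℚ] A) →ₗ[ℚ] A := LinearMap.mul' ℚ A

section
variable (d : ℕ → AddMonoid.End A) (hd0 : d 0 = 1)
  (hHS : ∀ n, 1 ≤ n → ∀ a b : A,
    d n (a * b) = ∑ i ∈ Finset.range (n + 1), d i a * d (n - i) b)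

include hd0 hHS in
/-- HS property in tensor form -/
lemma H1 (k : ℕ) : (dlin d k) ∘ₗ mu = mu ∘ₗ (coeff k (delL d * delR d)) := by
  apply TensorProduct.ext'
  intro a b
  simp only [LinearMap.comp_apply, mu, LinearMap.mul'_apply]
  rw [coeff_mul]
  have hterm : ∀ p ∈ antidiagonal k,
      (coeff p.1 (delL d) * coeff p.2 (delR d)) (a ⊗ₜ[ℚ] b) =
        (d p.1 a) ⊗ₜ[ℚ] (d p.2 b) := by
    rintro ⟨i, j⟩ _
    simp only [delL, delR, coeff_mk, Module.End.mul_apply, dL, dR]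
    rw [LinearMap.lTensor_tmul, LinearMap.rTensor_tmul]
    rfl
  rw [LinearMap.sum_apply, Finset.sum_congr rfl hterm, map_sum]
  have hmul : ∀ p ∈ antidiagonal k,
      (LinearMap.mul' ℚ A) ((d p.1 a) ⊗ₜ[ℚ] (d p.2 b)) = d p.1 a * d p.2 b := by
    rintro ⟨i, j⟩ _
    exact LinearMap.mul'_apply
  rw [Finset.sum_congr rfl hmul]
  rcases Nat.eq_zero_or_pos k with hk | hk
  · subst hk
    rw [Finset.Nat.antidiagonal_zero, Finset.sum_singleton]
    rw [dlin_apply, hd0]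
    rfl
  · rw [dlin_apply, hHS k hk a b, Finset.Nat.sum_antidiagonal_eq_sum_range_succ_mk]

include hd0 hHS in
lemma H2 (s : ℕ) : ∀ (k : ℕ) (z : A ⊗[ℚ] A),
    (coeff k ((del d) ^ s)) (mu z) = mu ((coeff k ((delL d * delR d) ^ s)) z) := by
  induction s with
  | zero =>
    intro k z
    simp only [pow_zero]
    rw [coeff_one, coeff_one]
    split
    · rw [Module.End.one_apply, Module.End.one_apply]
    · rw [LinearMap.zero_apply, LinearMap.zero_apply, map_zero]
  | succ s ih =>
    intro k z
    rw [pow_succ', pow_succ', coeff_mul, coeff_mul]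
    rw [LinearMap.sum_apply, LinearMap.sum_apply, map_sum]
    apply Finset.sum_congr rfl
    rintro ⟨i, j⟩ hij
    rw [Module.End.mul_apply, Module.End.mul_apply]
    rw [show (coeff i (del d)) = dlin d i from coeff_mk _ _]
    rw [ih j z]
    have := LinearMap.congr_fun (H1 d hd0 hHS i) ((coeff j ((delL d * delR d) ^ s)) z)
    simp only [LinearMap.comp_apply] at this
    rw [this]

lemma H3 : Commute (delL d) (delR d) := by
  unfold Commute SemiconjBy
  ext k
  rw [coeff_mul, coeff_mul]
  have h1 : ∀ p ∈ antidiagonal k,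
      coeff p.1 (delL d) * coeff p.2 (delR d)
        = TensorProduct.map (dlin d p.1) (dlin d p.2) := by
    rintro ⟨i, j⟩ _
    simp only [delL, delR, coeff_mk, dL, dR, Module.End.mul_eq_comp]
    rw [LinearMap.rTensor_comp_lTensor]
  have h2 : ∀ p ∈ antidiagonal k,
      coeff p.1 (delR d) * coeff p.2 (delL d)
        = TensorProduct.map (dlin d p.2) (dlin d p.1) := by
    rintro ⟨i, j⟩ _
    simp only [delL, delR, coeff_mk, dL, dR, Module.End.mul_eq_comp]
    rw [LinearMap.lTensor_comp_rTensor]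
  rw [Finset.sum_congr rfl h1, Finset.sum_congr rfl h2]
  conv_rhs => rw [← Finset.HasAntidiagonal.map_swap_antidiagonal, Finset.sum_map]
  rfl


end

/-- Finset of compositions (as lists) of `j` with `p` positive parts. -/
noncomputable def cps : ℕ → ℕ → Finset (List ℕ)
  | 0, j => if j = 0 then {[]} else ∅
  | p + 1, j =>
      ((antidiagonal j).filter fun ik => ik.1 ≠ 0).biUnion fun ik =>
        (cps p ik.2).map ⟨List.cons ik.1, List.cons_injective⟩

lemma mem_cps : ∀ p j l, l ∈ cps p j ↔ l.length = p ∧ (∀ x ∈ l, 0 < x) ∧ l.sum = j := by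
  intro p
  induction p with
  | zero =>
    intro j l
    rw [cps]
    split
    · subst ‹j = 0›
      simp only [Finset.mem_singleton]
      constructor
      · rintro rfl; simp
      · rintro ⟨h1, _, h3⟩
        exact List.length_eq_zero_iff.mp h1
    · simp only [Finset.notMem_empty, false_iff]
      rintro ⟨h1, _, h3⟩
      have : l = [] := List.length_eq_zero_iff.mp h1
      subst this
      simp at h3
      omega
  | succ p ih =>
    intro j l
    rw [cps]
    simp only [Finset.mem_biUnion, Finset.mem_filter, Finset.HasAntidiagonal.mem_antidiagonal, Finset.mem_map,
      Function.Embedding.coeFn_mk]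
    constructor
    · rintro ⟨⟨i, k⟩, ⟨hsum, hne⟩, l', hl', rfl⟩
      obtain ⟨h1, h2, h3⟩ := (ih k l').mp hl'
      refine ⟨by simp [h1], ?_, by simp [h3, hsum]⟩
      intro x hx
      rcases List.mem_cons.mp hx with rfl | hx
      · omega
      · exact h2 x hx
    · rintro ⟨h1, h2, h3⟩
      cases l with
      | nil => simp at h1
      | cons i l' =>
        refine ⟨(i, l'.sum), ⟨by simp at h3; omega, ?_⟩, l', ?_, rfl⟩
        · have : 0 < i := h2 i (by simp)
          omega
        · exact (ih l'.sum l').mpr ⟨by simpa using h1, fun x hx => h2 x (by simp [hx]), rfl⟩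

variable {S : Type*} [Ring S]

lemma coeff_pow_cps (ν : PowerSeries S) (e : ℕ → S)
    (hν : ∀ k, coeff k ν = if k = 0 then 0 else e k) :
    ∀ p j, coeff j (ν ^ p) = ∑ l ∈ cps p j, (l.map e).prod := by
  intro p
  induction p with
  | zero =>
    intro j
    rw [pow_zero, coeff_one, cps]
    split
    · rw [Finset.sum_singleton]
      simp
    · simp
  | succ p ih =>
    intro j
    rw [pow_succ', coeff_mul]
    have hstep : ∑ ik ∈ antidiagonal j, coeff ik.1 ν * coeff ik.2 (ν ^ p)
        = ∑ ik ∈ antidiagonal j,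
            (if ik.1 = 0 then 0 else e ik.1) * ∑ l ∈ cps p ik.2, (l.map e).prod := by
      apply Finset.sum_congr rfl
      intro ik _
      rw [hν, ih]
    rw [hstep]
    have hcond : ∀ ik ∈ antidiagonal j,
        (if ik.1 = 0 then 0 else e ik.1) * (∑ l ∈ cps p ik.2, (l.map e).prod) ≠ 0
          → ik.1 ≠ 0 := by
      intro ik _ hfne h0
      apply hfne
      rw [if_pos h0, zero_mul]
    rw [← Finset.sum_filter_of_ne hcond]
    rw [cps]
    rw [Finset.sum_biUnion]
    · apply Finset.sum_congr rfl
      rintro ⟨i, k⟩ hik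
      rw [Finset.mem_filter] at hik
      rw [if_neg hik.2, Finset.sum_map, Finset.mul_sum]
      apply Finset.sum_congr rfl
      intro l _
      rw [Function.Embedding.coeFn_mk, List.map_cons, List.prod_cons]
    · -- pairwise disjoint
      rintro ⟨i, k⟩ hik ⟨i', k'⟩ hik' hne'
      simp only [Finset.mem_coe, Finset.mem_filter, Finset.HasAntidiagonal.mem_antidiagonal] at hik hik'
      apply Finset.disjoint_left.mpr
      intro l hl hl'
      rw [Finset.mem_map] at hl hl'
      obtain ⟨u, hu, hul⟩ := hl
      obtain ⟨u', hu', hul'⟩ := hl'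
      simp only [Function.Embedding.coeFn_mk] at hul hul'
      apply hne'
      have heq : i = i' ∧ u = u' := by
        constructor
        · rw [← hul] at hul'
          exact (List.cons.injEq _ _ _ _ ▸ hul').1.symm
        · rw [← hul] at hul'
          exact (List.cons.injEq _ _ _ _ ▸ hul').2.symm
      obtain ⟨rfl, rfl⟩ := heq
      have : k = k' := by omega
      subst this
      rfl


/-- sum over cps = sum over compositions of given length -/
lemma sum_cps_composition {M : Type*} [AddCommMonoid M] (j p : ℕ) (F : List ℕ → M) :
    ∑ l ∈ cps p j, F l
      = ∑ c ∈ (Finset.univ : Finset (Composition j)).filter (fun c => c.length = p),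
          F c.blocks := by
  apply Finset.sum_bij'
    (i := fun l hl => (⟨l, fun hx => ((mem_cps p j l).mp hl).2.1 _ hx,
      ((mem_cps p j l).mp hl).2.2⟩ : Composition j))
    (j := fun c _ => c.blocks)
  case hi =>
    intro l hl
    rw [Finset.mem_filter]
    exact ⟨Finset.mem_univ _, ((mem_cps p j l).mp hl).1⟩
  case hj =>
    intro c hc
    rw [Finset.mem_filter] at hc
    rw [mem_cps]
    exact ⟨by rw [Composition.blocks_length]; exact hc.2,
      fun x hx => c.blocks_pos hx, c.blocks_sum⟩
  case left_neg =>
    intro l hl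
    rfl
  case right_neg =>
    intro c hc
    rfl
  case h =>
    intro l hl
    rfl



/-! ### Main assembly -/

section Main

variable {A : Type*} [Ring A] [Algebra ℚ A]
variable (d : ℕ → AddMonoid.End A) (hd0 : d 0 = 1)
  (hHS : ∀ n, 1 ≤ n → ∀ a b : A,
    d n (a * b) = ∑ i ∈ Finset.range (n + 1), d i a * d (n - i) b)

/-- the truncated logarithm of the HS derivation -/
noncomputable def Lam (n : ℕ) : PowerSeries (Module.End ℚ A) :=
  Polynomial.aeval (nu d) (logP n)

noncomputable def LamL (n : ℕ) : PowerSeries (Module.End ℚ (A ⊗[ℚ] A)) :=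
  Polynomial.aeval (nuL d) (logP n)

noncomputable def LamR (n : ℕ) : PowerSeries (Module.End ℚ (A ⊗[ℚ] A)) :=
  Polynomial.aeval (nuR d) (logP n)

lemma coeff_Lam (n k : ℕ) :
    coeff k (Lam d n) = ∑ p ∈ range (n + 1), Lc p • coeff k ((nu d) ^ p) := by
  rw [Lam, aeval_logP, map_sum]
  exact Finset.sum_congr rfl (fun p _ => coeff_smul k _ (Lc p))

lemma coeff_LamL (n k : ℕ) :
    coeff k (LamL d n) = ∑ p ∈ range (n + 1), Lc p • coeff k ((nuL d) ^ p) := by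
  rw [LamL, aeval_logP, map_sum]
  exact Finset.sum_congr rfl (fun p _ => coeff_smul k _ (Lc p))

lemma coeff_LamR (n k : ℕ) :
    coeff k (LamR d n) = ∑ p ∈ range (n + 1), Lc p • coeff k ((nuR d) ^ p) := by
  rw [LamR, aeval_logP, map_sum]
  exact Finset.sum_congr rfl (fun p _ => coeff_smul k _ (Lc p))

include hd0 in
lemma list_prod_apply : ∀ (bs : List ℕ) (x : A),
    ((bs.map (dlin d)).prod) x = ((bs.map d).prod) x := by
  intro bs
  induction bs with
  | nil => intro x; rfl
  | cons b bs ih =>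
    intro x
    rw [List.map_cons, List.map_cons, List.prod_cons, List.prod_cons]
    rw [Module.End.mul_apply]
    rw [show ((d b) * (bs.map d).prod) x = d b (((bs.map d).prod) x) from rfl]
    rw [ih x, dlin_apply]

include hd0 in
/-- bridge: the `n`-th coefficient of `Lam` is the composition sum in `hD` -/
lemma coeff_Lam_apply (n : ℕ) (hn : 1 ≤ n) (x : A) :
    (coeff n (Lam d n)) x
      = ∑ c : Composition n,
          ((-1 : ℚ) ^ (c.length + 1) / c.length) • ((c.blocks.map d).prod x) := by
  rw [coeff_Lam]
  have h1 : ∀ p, coeff n ((nu d) ^ p)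
      = ∑ c ∈ (Finset.univ : Finset (Composition n)).filter (fun c => c.length = p),
          (c.blocks.map (dlin d)).prod := by
    intro p
    rw [coeff_pow_cps (nu d) (dlin d) (coeff_nu d hd0) p n]
    exact sum_cps_composition n p _
  have h2 : ∑ p ∈ range (n + 1), Lc p • coeff n ((nu d) ^ p)
      = ∑ p ∈ range (n + 1),
          ∑ c ∈ (Finset.univ : Finset (Composition n)).filter (fun c => c.length = p),
            Lc c.length • (c.blocks.map (dlin d)).prod := by
    apply Finset.sum_congr rfl
    intro p _
    rw [h1, Finset.smul_sum]
    apply Finset.sum_congr rfl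
    intro c hc
    rw [Finset.mem_filter] at hc
    rw [hc.2]
  rw [h2]
  rw [Finset.sum_fiberwise_of_maps_to (fun c _ => Finset.mem_range.mpr
    (lt_of_le_of_lt c.length_le (by omega)))]
  rw [LinearMap.sum_apply]
  apply Finset.sum_congr rfl
  intro c _
  rw [LinearMap.smul_apply, list_prod_apply d hd0]
  rfl

include hd0 hHS in
/-- key identity: the coefficient evaluated on a product -/
lemma main_id (n : ℕ) (hn : 1 ≤ n) (a b : A) :
    (coeff n (Lam d n)) (a * b)
      = a * (coeff n (Lam d n)) b + (coeff n (Lam d n)) a * b := by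
  set z : A ⊗[ℚ] A := a ⊗ₜ[ℚ] b with hz
  -- the two sides as polynomials in s, equal for all natural s
  set u : ℕ → A := fun m =>
    ((1 : ℚ) / m.factorial) • ((coeff n ((Lam d n) ^ m)) (mu z)) with hu
  set v : ℕ → A := fun M =>
    ∑ mm ∈ (range (n+1) ×ˢ range (n+1)).filter (fun mm => mm.1 + mm.2 = M),
      ((1 : ℚ) / (mm.1.factorial * mm.2.factorial)) •
        mu ((coeff n ((LamL d n) ^ mm.1 * (LamR d n) ^ mm.2)) z) with hv
  have key : ∀ s : ℕ,
      (coeff n (Polynomial.aeval (nu d) (expsP n s))) (mu z)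
        = mu ((coeff n
            (Polynomial.aeval (nuL d) (expsP n s) *
             Polynomial.aeval (nuR d) (expsP n s))) z) := by
    intro s
    have c1 : ∀ k ≤ n, coeff k (Polynomial.aeval (nu d) (expsP n s))
        = coeff k ((del d) ^ s) := by
      intro k hk
      have := aeval_coeff_congr (n := n) (nu d) (constantCoeff_nu d hd0)
        (key_dvd n s) k hk
      rw [this]
      rw [map_pow, map_add, map_one, Polynomial.aeval_X, ← del_eq d hd0]
    have cL : ∀ k ≤ n, coeff k (Polynomial.aeval (nuL d) (expsP n s))
        = coeff k ((delL d) ^ s) := by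
      intro k hk
      have := aeval_coeff_congr (n := n) (nuL d) (by
        rw [← coeff_zero_eq_constantCoeff, coeff_nuL d hd0, coeff_zero_eq_constantCoeff_apply,
          constantCoeff_nu d hd0, LinearMap.rTensor_zero])
        (key_dvd n s) k hk
      rw [this]
      rw [map_pow, map_add, map_one, Polynomial.aeval_X, ← delL_eq d]
    have cR : ∀ k ≤ n, coeff k (Polynomial.aeval (nuR d) (expsP n s))
        = coeff k ((delR d) ^ s) := by
      intro k hk
      have := aeval_coeff_congr (n := n) (nuR d) (by
        rw [← coeff_zero_eq_constantCoeff, coeff_nuR d hd0, coeff_zero_eq_constantCoeff_apply,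
          constantCoeff_nu d hd0, LinearMap.lTensor_zero])
        (key_dvd n s) k hk
      rw [this]
      rw [map_pow, map_add, map_one, Polynomial.aeval_X, ← delR_eq d]
    rw [c1 n le_rfl]
    rw [coeff_mul_congr cL cR n le_rfl]
    rw [← Commute.mul_pow (H3 d) s]
    exact H2 d hd0 hHS s n z
  -- expand LHS of key
  have hL : ∀ s : ℕ,
      (coeff n (Polynomial.aeval (nu d) (expsP n s))) (mu z)
        = ∑ m ∈ range (n+1), (s : ℚ)^m • u m := by
    intro s
    rw [aeval_expsP, map_sum, LinearMap.sum_apply]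
    apply Finset.sum_congr rfl
    intro m _
    rw [coeff_smul, LinearMap.smul_apply, hu]
    show ((s:ℚ)^m / m.factorial) • _ = _
    rw [smul_smul]
    congr 1
    field_simp
  -- expand RHS of key
  have hR : ∀ s : ℕ,
      mu ((coeff n
            (Polynomial.aeval (nuL d) (expsP n s) *
             Polynomial.aeval (nuR d) (expsP n s))) z)
        = ∑ M ∈ range (2*n+2), (s : ℚ)^M • v M := by
    intro s
    rw [aeval_expsP, aeval_expsP, Finset.sum_mul_sum]
    have hterm : ∀ m1 m2 : ℕ,
        (((s:ℚ)^m1 / m1.factorial) • (Polynomial.aeval (nuL d) (logP n))^m1) *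
          (((s:ℚ)^m2 / m2.factorial) • (Polynomial.aeval (nuR d) (logP n))^m2)
        = (((s:ℚ)^m1 / m1.factorial) * ((s:ℚ)^m2 / m2.factorial)) •
            ((LamL d n)^m1 * (LamR d n)^m2) := by
      intro m1 m2
      rw [smul_mul_smul_comm]
      rfl
    have hstep : mu ((coeff n (∑ m1 ∈ range (n+1), ∑ m2 ∈ range (n+1),
        (((s:ℚ)^m1 / m1.factorial) • (Polynomial.aeval (nuL d) (logP n))^m1) *
          (((s:ℚ)^m2 / m2.factorial) • (Polynomial.aeval (nuR d) (logP n))^m2))) z)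
        = ∑ m1 ∈ range (n+1), ∑ m2 ∈ range (n+1),
            (((s:ℚ)^m1 / m1.factorial) * ((s:ℚ)^m2 / m2.factorial)) •
              mu ((coeff n ((LamL d n)^m1 * (LamR d n)^m2)) z) := by
      rw [Finset.sum_congr rfl (fun m1 _ => Finset.sum_congr rfl
        (fun m2 _ => hterm m1 m2))]
      rw [map_sum, LinearMap.sum_apply, map_sum]
      apply Finset.sum_congr rfl
      intro m1 _
      rw [map_sum, LinearMap.sum_apply, map_sum]
      apply Finset.sum_congr rfl
      intro m2 _
      rw [coeff_smul, LinearMap.smul_apply, map_smul]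
    rw [hstep]
    rw [← Finset.sum_product']
    have hmaps : ∀ mm : ℕ × ℕ, mm ∈ range (n+1) ×ˢ range (n+1) →
        mm.1 + mm.2 ∈ range (2*n+2) := by
      rintro ⟨m1, m2⟩ hmm
      rw [Finset.mem_product, Finset.mem_range, Finset.mem_range] at hmm
      rw [Finset.mem_range]
      omega
    rw [← Finset.sum_fiberwise_of_maps_to hmaps]
    apply Finset.sum_congr rfl
    intro M _
    rw [hv, Finset.smul_sum]
    apply Finset.sum_congr rfl
    rintro ⟨m1, m2⟩ hmm
    rw [Finset.mem_filter] at hmm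
    have hM : m1 + m2 = M := hmm.2
    rw [smul_smul]
    congr 1
    subst hM
    rw [pow_add]
    field_simp
  -- polynomial density in s
  have hsum : ∀ s : ℕ,
      ∑ M ∈ range (2*n+2), (s:ℚ)^M • ((if M ≤ n then u M else 0) - v M) = 0 := by
    intro s
    have e1 : ∑ m ∈ range (n+1), (s:ℚ)^m • u m = ∑ M ∈ range (2*n+2), (s:ℚ)^M • v M :=
      (hL s).symm.trans ((key s).trans (hR s))
    have e2 : ∑ M ∈ range (2*n+2), (s:ℚ)^M • (if M ≤ n then u M else 0)
        = ∑ m ∈ range (n+1), (s:ℚ)^m • u m := by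
      rw [← Finset.sum_subset (Finset.range_subset_range.mpr (by omega : n + 1 ≤ 2*n+2))
        (fun M _ hM => by
          rw [Finset.mem_range, not_lt] at hM
          rw [if_neg (by omega), smul_zero])]
      apply Finset.sum_congr rfl
      intro m hm
      rw [Finset.mem_range] at hm
      rw [if_pos (by omega)]
    simp only [smul_sub]
    rw [Finset.sum_sub_distrib, e2, e1, sub_self]
  have hw := poly_coeff_zero _ hsum 1 (Finset.mem_range.mpr (by omega))
  rw [if_pos hn] at hw
  have huv : u 1 = v 1 := sub_eq_zero.mp hw
  -- compute u 1
  have hu1 : u 1 = (coeff n (Lam d n)) (a * b) := by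
    rw [hu]
    show ((1:ℚ) / (Nat.factorial 1)) • ((coeff (R := Module.End ℚ A) n ((Lam d n) ^ 1)) (mu z)) = _
    rw [pow_one, Nat.factorial_one]
    rw [show mu z = a * b from LinearMap.mul'_apply]
    norm_num
  -- compute v 1
  have hfil : (range (n+1) ×ˢ range (n+1)).filter (fun mm => mm.1 + mm.2 = 1)
      = ({((0:ℕ),(1:ℕ)), ((1:ℕ),(0:ℕ))} : Finset (ℕ × ℕ)) := by
    ext ⟨m1, m2⟩
    simp only [Finset.mem_filter, Finset.mem_product, Finset.mem_range,
      Finset.mem_insert, Finset.mem_singleton, Prod.mk.injEq]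
    omega
  have hv1 : v 1 = mu ((coeff n (LamR d n)) z) + mu ((coeff n (LamL d n)) z) := by
    rw [hv]
    show ∑ mm ∈ (range (n+1) ×ˢ range (n+1)).filter (fun mm => mm.1 + mm.2 = 1), _ = _
    rw [hfil, Finset.sum_pair (by decide : ((0:ℕ),(1:ℕ)) ≠ ((1:ℕ),(0:ℕ)))]
    congr 1
    · show ((1:ℚ) / ((Nat.factorial 0) * (Nat.factorial 1))) •
          mu ((coeff (R := Module.End ℚ (A ⊗[ℚ] A)) n ((LamL d n)^0 * (LamR d n)^1)) z) = _
      rw [pow_zero, pow_one, one_mul, Nat.factorial_zero, Nat.factorial_one]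
      norm_num
    · show ((1:ℚ) / ((Nat.factorial 1) * (Nat.factorial 0))) •
          mu ((coeff (R := Module.End ℚ (A ⊗[ℚ] A)) n ((LamL d n)^1 * (LamR d n)^0)) z) = _
      rw [pow_one, pow_zero, mul_one, Nat.factorial_zero, Nat.factorial_one]
      norm_num
  -- identify the two terms
  have hRterm : mu ((coeff n (LamR d n)) z) = a * (coeff n (Lam d n)) b := by
    rw [coeff_LamR]
    have hcoe : ∀ p, coeff n ((nuR d) ^ p)
        = LinearMap.lTensor A (coeff n ((nu d) ^ p)) :=
      fun p => coeff_pow_nuR d hd0 p n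
    simp only [hcoe]
    rw [LinearMap.sum_apply, map_sum]
    rw [coeff_Lam, LinearMap.sum_apply, Finset.mul_sum]
    apply Finset.sum_congr rfl
    intro p _
    rw [LinearMap.smul_apply, map_smul, hz, LinearMap.lTensor_tmul]
    rw [show mu (a ⊗ₜ[ℚ] ((coeff n ((nu d) ^ p)) b)) = a * (coeff n ((nu d) ^ p)) b
      from LinearMap.mul'_apply]
    rw [LinearMap.smul_apply, mul_smul_comm]
  have hLterm : mu ((coeff n (LamL d n)) z) = (coeff n (Lam d n)) a * b := by
    rw [coeff_LamL]
    have hcoe : ∀ p, coeff n ((nuL d) ^ p)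
        = LinearMap.rTensor A (coeff n ((nu d) ^ p)) :=
      fun p => coeff_pow_nuL d hd0 p n
    simp only [hcoe]
    rw [LinearMap.sum_apply, map_sum]
    rw [coeff_Lam, LinearMap.sum_apply, Finset.sum_mul]
    apply Finset.sum_congr rfl
    intro p _
    rw [LinearMap.smul_apply, map_smul, hz, LinearMap.rTensor_tmul]
    rw [show mu (((coeff n ((nu d) ^ p)) a) ⊗ₜ[ℚ] b) = (coeff n ((nu d) ^ p)) a * b
      from LinearMap.mul'_apply]
    rw [LinearMap.smul_apply, smul_mul_assoc]
  rw [← hu1, huv, hv1, hRterm, hLterm]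

end Main

end Stmt15Aux



/-- Theorem 5.5 (first part): for a Hasse-Schmidt derivation `(id, d 1, d 2, ...)` on an
associative `ℚ`-algebra, the endomorphisms
`D n = Σ (-1)^{m+1} d_{r_1} ⋯ d_{r_m} / m` (sum over compositions of `n`)
are ordinary derivations. -/
theorem stmt_15 {A : Type*} [Ring A] [Algebra ℚ A]
    (d : ℕ → AddMonoid.End A) (hd0 : d 0 = 1)
    (hHS : ∀ n, 1 ≤ n → ∀ a b : A,
      d n (a * b) = ∑ i ∈ Finset.range (n + 1), d i a * d (n - i) b)
    (D : ℕ → AddMonoid.End A)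
    (hD : ∀ n, 1 ≤ n → ∀ a : A,
      D n a = ∑ c : Composition n,
        ((-1 : ℚ) ^ (c.length + 1) / c.length) • ((c.blocks.map d).prod a)) :
    ∀ n, 1 ≤ n → ∀ a b : A, D n (a * b) = a * D n b + D n a * b := by
  intro n hn a b
  rw [hD n hn (a * b), hD n hn a, hD n hn b]
  rw [← Stmt15Aux.coeff_Lam_apply d hd0 n hn (a * b),
    ← Stmt15Aux.coeff_Lam_apply d hd0 n hn a,
    ← Stmt15Aux.coeff_Lam_apply d hd0 n hn b]
  exact Stmt15Aux.main_id d hd0 hHS n hn a b
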